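/- arXiv:2511.10331 — 2 statements merged into one kernel-verified Lean document; each statement's English description precedes it below -/
import Mathlib

section
/- Let Y₁ ⊆ Y₂ be similarity embeddings in ℝ^d ⊂ ℝ^{d+1}, and let c₀, c₁, c₂, c₃ be positive constants with 0 < c₀ ≤ 1, c₂ ≤ 2, such that ρ_{Y₂} < c₀, √(ρ_{Y₂}² − ρ_{Y₁}²) > c₁, diam Y₂ < c₂·ρ_{Y₂}, and c₀⁻¹ + √(c₀⁻² − 1) < c₃. Let y' ∈ ℝ^{d+1} be a point whose orthogonal projection onto the affine span of Y₂ equals the circumcenter K_{Y₂} and which satisfies ∥K_{Y₂} − y'∥ = c₃·ρ_{Y₂}. Then there exist δ₀ > 0 and δ₁ > 0, depending only on c₀, c₁, c₂, c₃, such that the sets Y₁' := Y₁ ∪ {y'} and Y₂' := Y₂ ∪ {y'} satisfy √(ρ_{Y₂'}² − ρ_{Y₁'}²) > δ₀, and for every real u with 0 < u < δ₁ the dilated sets u·Y₁' and u·Y₂' are similarity embeddings. -/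
open Metric Pointwise

noncomputable section

/-- The tri-similarity inequality for a triple of points of a Euclidean space. -/
def TriSim {E : Type*} [NormedAddCommGroup E] [InnerProductSpace ℝ E] (a b c : E) : Prop :=
  ‖a - c‖ ^ 2 + (1 / 2) * (‖a - b‖ ^ 2 * ‖b - c‖ ^ 2) ≤ ‖a - b‖ ^ 2 + ‖b - c‖ ^ 2

/-- A point `c` and a radius `ρ` form a circumsphere of the set `Y` if `c` lies in the
affine span of `Y` and every point of `Y` is at distance `ρ` from `c`. -/
def IsCircum {E : Type*} [NormedAddCommGroup E] [InnerProductSpace ℝ E]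
    (Y : Set E) (c : E) (ρ : ℝ) : Prop :=
  c ∈ affineSpan ℝ Y ∧ ∀ y ∈ Y, dist c y = ρ

open Classical in
/-- The circumcenter and circumradius of a subset of a Euclidean space (junk value if no
circumsphere exists). -/
noncomputable def circumData {E : Type*} [NormedAddCommGroup E] [InnerProductSpace ℝ E]
    (Y : Set E) : E × ℝ :=
  if h : ∃ p : E × ℝ, IsCircum Y p.1 p.2 ∧ 0 ≤ p.2 then h.choose else (0, 0)

/-- The circumcenter of a subset of a Euclidean space. -/
noncomputable def circumcenter {E : Type*} [NormedAddCommGroup E] [InnerProductSpace ℝ E]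
    (Y : Set E) : E := (circumData Y).1

/-- The circumradius of a subset of a Euclidean space. -/
noncomputable def circumradius {E : Type*} [NormedAddCommGroup E] [InnerProductSpace ℝ E]
    (Y : Set E) : ℝ := (circumData Y).2

/-- A similarity embedding: a finite affinely independent subset `Y` of a Euclidean space
with `‖y − y'‖² < 2` for all `y, y' ∈ Y`, circumradius `< 1`, and all triples satisfying
the tri-similarity inequality. -/
def IsSimEmb {E : Type*} [NormedAddCommGroup E] [InnerProductSpace ℝ E] (Y : Set E) : Prop :=
  Y.Finite ∧ AffineIndependent ℝ ((↑) : Y → E) ∧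
    (∀ y ∈ Y, ∀ y' ∈ Y, ‖y - y'‖ ^ 2 < 2) ∧
    circumradius Y < 1 ∧
    ∀ a ∈ Y, ∀ b ∈ Y, ∀ c ∈ Y, TriSim a b c

section Helpers

variable {E : Type*} [NormedAddCommGroup E] [InnerProductSpace ℝ E]

lemma inner_eq_of_equidist {Y : Set E} {c : E} {r : ℝ} (h : ∀ y ∈ Y, dist c y = r)
    {y z : E} (hy : y ∈ Y) (hz : z ∈ Y) :
    (inner ℝ c (y - z) : ℝ) = (‖y‖ ^ 2 - ‖z‖ ^ 2) / 2 := by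
  have h1 : ‖c - y‖ = ‖c - z‖ := by
    rw [← dist_eq_norm, ← dist_eq_norm, h y hy, h z hz]
  have h2 : ‖c - y‖ ^ 2 = ‖c - z‖ ^ 2 := by rw [h1]
  rw [norm_sub_sq_real, norm_sub_sq_real] at h2
  rw [inner_sub_right]
  linarith

lemma inner_sub_eq_zero_of_equidist {Y : Set E} {c c' : E} {r r' : ℝ}
    (h : ∀ y ∈ Y, dist c y = r) (h' : ∀ y ∈ Y, dist c' y = r')
    {y z : E} (hy : y ∈ Y) (hz : z ∈ Y) :
    (inner ℝ (c - c') (y - z) : ℝ) = 0 := by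
  rw [inner_sub_left, inner_eq_of_equidist h hy hz, inner_eq_of_equidist h' hy hz]
  ring

lemma inner_eq_zero_of_mem_vectorSpan {Y : Set E} {v : E}
    (hv : ∀ y ∈ Y, ∀ z ∈ Y, (inner ℝ v (y - z) : ℝ) = 0)
    {w : E} (hw : w ∈ vectorSpan ℝ Y) : (inner ℝ v w : ℝ) = 0 := by
  rw [vectorSpan_def] at hw
  induction hw using Submodule.span_induction with
  | mem x hx =>
      rcases Set.mem_sub.1 hx with ⟨y, hy, z, hz, rfl⟩
      exact hv y hy z hz
  | zero => exact inner_zero_right v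
  | add x y _ _ hx hy => rw [inner_add_right, hx, hy, add_zero]
  | smul a x _ hx => rw [inner_smul_right, hx, mul_zero]

lemma IsCircum.nonempty {Y : Set E} {c : E} {r : ℝ} (h : IsCircum Y c r) : Y.Nonempty := by
  by_contra hne
  rw [Set.not_nonempty_iff_eq_empty] at hne
  subst hne
  have := h.1
  rw [AffineSubspace.span_empty] at this
  exact AffineSubspace.notMem_bot ℝ E c this

lemma isCircum_unique {Y : Set E} {c c' : E} {r r' : ℝ}
    (h : IsCircum Y c r) (h' : IsCircum Y c' r') : c = c' ∧ r = r' := by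
  obtain ⟨y₀, hy₀⟩ := h.nonempty
  have hcc' : c - c' ∈ vectorSpan ℝ Y := by
    have := AffineSubspace.vsub_mem_direction h.1 h'.1
    rwa [direction_affineSpan] at this
  have hz : (inner ℝ (c - c') (c - c') : ℝ) = 0 :=
    inner_eq_zero_of_mem_vectorSpan
      (fun y hy z hzz => inner_sub_eq_zero_of_equidist h.2 h'.2 hy hzz) hcc'
  have hc : c = c' := by
    have := inner_self_eq_zero.mp hz
    rwa [sub_eq_zero] at this
  refine ⟨hc, ?_⟩
  rw [← h.2 y₀ hy₀, ← h'.2 y₀ hy₀, hc]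

lemma circum_spec {Y : Set E} {c : E} {r : ℝ} (h : IsCircum Y c r) (hr : 0 ≤ r) :
    circumcenter Y = c ∧ circumradius Y = r := by
  have hex : ∃ p : E × ℝ, IsCircum Y p.1 p.2 ∧ 0 ≤ p.2 := ⟨(c, r), h, hr⟩
  have hd : circumData Y = hex.choose := by
    rw [circumData, dif_pos hex]
  have hspec := hex.choose_spec
  obtain ⟨h1, h2⟩ := isCircum_unique hspec.1 h
  constructor
  · rw [circumcenter, hd, h1]
  · rw [circumradius, hd, h2]

lemma circumradius_nonneg (Y : Set E) : 0 ≤ circumradius Y := by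
  rw [circumradius, circumData]
  split
  · next h => exact h.choose_spec.2
  · simp

lemma circum_genuine {Y : Set E} (h : circumradius Y ≠ 0) :
    IsCircum Y (circumcenter Y) (circumradius Y) := by
  rw [circumcenter, circumradius, circumData] at *
  split at h
  · next hex =>
      simpa [circumData, dif_pos hex] using hex.choose_spec.1
  · simp at h

lemma exists_isCircum {E : Type*} [NormedAddCommGroup E] [InnerProductSpace ℝ E]
    [FiniteDimensional ℝ E]
    {Y : Set E} (hfin : Y.Finite) (hne : Y.Nonempty)
    (hai : AffineIndependent ℝ ((↑) : Y → E)) :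
    ∃ c r, IsCircum Y c r ∧ 0 ≤ r := by
  haveI : Finite Y := hfin.to_subtype
  haveI : Nonempty Y := hne.to_subtype
  obtain ⟨cs, ⟨hc, hsub⟩, -⟩ := hai.existsUnique_dist_eq
  rw [Subtype.range_coe] at hc hsub
  obtain ⟨y₀, hy₀⟩ := hne
  refine ⟨cs.center, cs.radius, ⟨hc, fun y hy => ?_⟩, ?_⟩
  · have := hsub hy
    rw [Metric.sphere, Set.mem_setOf_eq] at this
    rw [dist_comm]; exact this
  · have := hsub hy₀
    rw [Metric.sphere, Set.mem_setOf_eq] at this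
    rw [← this]; exact dist_nonneg

/-- Extending a circumsphere by one orthogonally placed point. -/
lemma isCircum_insert {Y : Set E} {K : E} {ρ L : ℝ} (hY : IsCircum Y K ρ)
    {y' : E} (horth : ∀ y ∈ Y, ∀ z ∈ Y, (inner ℝ (y' - K) (y - z) : ℝ) = 0)
    (hL : ‖y' - K‖ = L) (hL0 : 0 < L) :
    IsCircum (insert y' Y) (K + ((L ^ 2 - ρ ^ 2) / (2 * L ^ 2)) • (y' - K))
      ((L ^ 2 + ρ ^ 2) / (2 * L)) := by
  set s : ℝ := (L ^ 2 - ρ ^ 2) / (2 * L ^ 2) with hs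
  constructor
  · have hK : K ∈ affineSpan ℝ (insert y' Y) :=
      affineSpan_mono ℝ (Set.subset_insert y' Y) hY.1
    have hy' : y' ∈ affineSpan ℝ (insert y' Y) :=
      mem_affineSpan ℝ (Set.mem_insert y' Y)
    have := AffineSubspace.smul_vsub_vadd_mem (affineSpan ℝ (insert y' Y)) s hy' hK hK
    convert this using 1
    simp [vsub_eq_sub, vadd_eq_add]
    abel
  · intro z hz
    have horthV : ∀ w ∈ vectorSpan ℝ Y, (inner ℝ (y' - K) w : ℝ) = 0 :=
      fun w hw => inner_eq_zero_of_mem_vectorSpan horth hw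
    rcases Set.mem_insert_iff.1 hz with rfl | hzY
    · have hh : K + s • (z - K) - z = (s - 1) • (z - K) := by
        rw [sub_smul, one_smul]; abel
      rw [dist_eq_norm, hh, norm_smul, hL]
      rw [Real.norm_eq_abs, abs_of_nonpos (by
        have h1 : s ≤ 1 := by
          rw [hs, div_le_one (by positivity)]
          nlinarith
        linarith)]
      rw [hs]
      field_simp
      ring
    · have hKz : ‖K - z‖ = ρ := by rw [← dist_eq_norm]; exact hY.2 z hzY
      have hKzV : (inner ℝ (y' - K) (K - z) : ℝ) = 0 := by
        apply horthV
        have : K -ᵥ z ∈ (affineSpan ℝ Y).direction :=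
          AffineSubspace.vsub_mem_direction hY.1 (mem_affineSpan ℝ hzY)
        rwa [direction_affineSpan] at this
      have hexp : K + s • (y' - K) - z = (K - z) + s • (y' - K) := by abel
      have hsq : dist (K + s • (y' - K)) z ^ 2 = ρ ^ 2 + s ^ 2 * L ^ 2 := by
        have hKzV' : (inner ℝ (K - z) (y' - K) : ℝ) = 0 := by
          rw [real_inner_comm]; exact hKzV
        rw [dist_eq_norm, hexp, norm_add_sq_real, inner_smul_right, hKzV', norm_smul,
          Real.norm_eq_abs, hKz, hL, mul_zero, mul_zero, add_zero, mul_pow, sq_abs]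
      have hρ' : (0:ℝ) ≤ (L ^ 2 + ρ ^ 2) / (2 * L) := by positivity
      have hval : ρ ^ 2 + s ^ 2 * L ^ 2 = ((L ^ 2 + ρ ^ 2) / (2 * L)) ^ 2 := by
        rw [hs]; field_simp; ring
      nlinarith [dist_nonneg (x := K + s • (y' - K)) (y := z), hsq]

lemma affineIndependent_insert' {Y : Set E}
    (hai : AffineIndependent ℝ ((↑) : Y → E)) {y' : E}
    (hy' : y' ∉ affineSpan ℝ Y) :
    AffineIndependent ℝ ((↑) : ↥(insert y' Y) → E) := by
  apply AffineIndependent.affineIndependent_of_notMem_span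
    (i := (⟨y', Set.mem_insert y' Y⟩ : ↥(insert y' Y)))
  · have hmem : ∀ x : {x : ↥(insert y' Y) // x ≠ ⟨y', Set.mem_insert y' Y⟩},
        (x.1.1 ∈ Y) := by
      intro x
      rcases Set.mem_insert_iff.1 x.1.2 with h | h
      · exact absurd (Subtype.ext h) x.2
      · exact h
    let f : {x : ↥(insert y' Y) // x ≠ ⟨y', Set.mem_insert y' Y⟩} ↪ ↥Y :=
      ⟨fun x => ⟨x.1.1, hmem x⟩, by
        intro x y h
        have h3 : x.1.1 = y.1.1 := congrArg (Subtype.val : ↥Y → E) h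
        exact Subtype.ext (Subtype.ext h3)⟩
    have h2 := hai.comp_embedding f
    exact h2
  · intro hmem
    apply hy'
    refine affineSpan_mono ℝ ?_ hmem
    rintro x ⟨⟨z, hz⟩, hne, rfl⟩
    rcases Set.mem_insert_iff.1 hz with h | h
    · exact absurd (Subtype.ext h) hne
    · exact h

lemma affineIndependent_smul_set {Y : Set E} {u : ℝ} (hu : u ≠ 0)
    (hai : AffineIndependent ℝ ((↑) : Y → E)) :
    AffineIndependent ℝ ((↑) : (u • Y : Set E) → E) := by
  have himg : (fun x : E => u • x) '' Y = u • Y := Set.image_smul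
  rw [← himg]
  have hfn : (fun x : E => u • x) = ⇑((LinearEquiv.smulOfNeZero ℝ E u hu).toAffineEquiv) := by
    ext x
    simp [LinearEquiv.smulOfNeZero, LinearEquiv.smulOfUnit, Units.smul_def]
  rw [hfn]
  exact (AffineEquiv.affineIndependent_set_of_eq_iff _).2 hai

lemma isCircum_smul {Y : Set E} {c : E} {r u : ℝ} (h : IsCircum Y c r) (hu : 0 < u) :
    IsCircum (u • Y) (u • c) (u * r) := by
  constructor
  · have hm : (LinearMap.lsmul ℝ E u).toAffineMap c ∈
        (affineSpan ℝ Y).map (LinearMap.lsmul ℝ E u).toAffineMap :=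
      AffineSubspace.mem_map.2 ⟨c, h.1, rfl⟩
    rw [AffineSubspace.map_span] at hm
    rwa [show ⇑(LinearMap.lsmul ℝ E u).toAffineMap = fun x : E => u • x from rfl,
      Set.image_smul] at hm
  · rintro z hz
    obtain ⟨y, hy, rfl⟩ := Set.mem_smul_set.1 hz
    rw [dist_smul₀, Real.norm_eq_abs, abs_of_pos hu, h.2 y hy]

lemma inner_triple (a b c : E) :
    (inner ℝ (b - a) (b - c) : ℝ) = (‖a - b‖ ^ 2 + ‖b - c‖ ^ 2 - ‖a - c‖ ^ 2) / 2 := by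
  have h : a - c = (a - b) + (b - c) := by abel
  rw [h, norm_add_sq_real]
  have h2 : (inner ℝ (b - a) (b - c) : ℝ) = - inner ℝ (a - b) (b - c) := by
    rw [← inner_neg_left, neg_sub]
  rw [h2]
  ring

lemma triSim_smul {a b c : E} {u : ℝ} (hu : 0 < u)
    (h : u ^ 2 / 4 * (‖a - b‖ ^ 2 * ‖b - c‖ ^ 2) ≤ (inner ℝ (b - a) (b - c) : ℝ)) :
    TriSim (u • a) (u • b) (u • c) := by
  have key := inner_triple a b c
  have hn : ∀ x y : E, ‖u • x - u • y‖ ^ 2 = u ^ 2 * ‖x - y‖ ^ 2 := by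
    intro x y
    rw [← smul_sub, norm_smul, Real.norm_eq_abs, mul_pow, sq_abs]
  have h1 : ‖a - c‖ ^ 2 ≤ ‖a - b‖ ^ 2 + ‖b - c‖ ^ 2 - u ^ 2 / 2 * (‖a - b‖ ^ 2 * ‖b - c‖ ^ 2) := by
    linarith [key]
  have h2 := mul_le_mul_of_nonneg_left h1 (sq_nonneg u)
  rw [TriSim, hn, hn, hn]
  nlinarith [h2]

lemma triSim_inner {a b c : E} (h : TriSim a b c) {u : ℝ} (hu1 : u ≤ 1) (hu0 : 0 ≤ u) :
    u ^ 2 / 4 * (‖a - b‖ ^ 2 * ‖b - c‖ ^ 2) ≤ (inner ℝ (b - a) (b - c) : ℝ) := by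
  have key := inner_triple a b c
  rw [TriSim] at h
  have hprod : 0 ≤ ‖a - b‖ ^ 2 * ‖b - c‖ ^ 2 := mul_nonneg (sq_nonneg _) (sq_nonneg _)
  have hu2 : u ^ 2 ≤ 1 := by nlinarith
  nlinarith [key, mul_le_mul_of_nonneg_right hu2 hprod]

set_option maxHeartbeats 1000000 in
/-- The main workhorse: a dilate of a similarity embedding extended by an orthogonally
pushed point is again a similarity embedding, for small enough dilation factor. -/
lemma isSimEmb_smul_insert {Y : Set E} {K₂ y' c' : E} {ρ₂ c₃ u ρ' : ℝ}
    (hfin : Y.Finite) (hai : AffineIndependent ℝ ((↑) : Y → E))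
    (hnorm : ∀ y ∈ Y, ∀ z ∈ Y, ‖y - z‖ ^ 2 < 2)
    (htris : ∀ a ∈ Y, ∀ b ∈ Y, ∀ c ∈ Y, TriSim a b c)
    (hdist : ∀ y ∈ Y, dist K₂ y = ρ₂)
    (hρ₂0 : 0 ≤ ρ₂) (hρ₂1 : ρ₂ < 1) (hc₃ : 1 < c₃)
    (horthK : ∀ y ∈ Y, (inner ℝ (y' - K₂) (K₂ - y) : ℝ) = 0)
    (hLval : ‖y' - K₂‖ = c₃ * ρ₂)
    (hns : y' ∉ affineSpan ℝ Y)
    (hcirc : IsCircum (insert y' Y) c' ρ') (hρ'0 : 0 ≤ ρ')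
    (hu0 : 0 < u) (hu1 : u ≤ 1)
    (hu2 : u ^ 2 * (c₃ ^ 2 + 1) ^ 2 ≤ 4 * (c₃ ^ 2 - 1))
    (hu3 : u ^ 2 * (c₃ ^ 2 + 1) < 2)
    (hur : u * ρ' < 1) :
    IsSimEmb (u • insert y' Y) := by
  have hKnorm : ∀ y ∈ Y, ‖K₂ - y‖ = ρ₂ := by
    intro y hy; rw [← dist_eq_norm]; exact hdist y hy
  have hyd : ∀ y ∈ Y, ‖y' - y‖ ^ 2 = (c₃ * ρ₂) ^ 2 + ρ₂ ^ 2 := by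
    intro y hy
    have hde : y' - y = (y' - K₂) + (K₂ - y) := by abel
    rw [hde, norm_add_sq_real, horthK y hy, hLval, hKnorm y hy, mul_zero, add_zero]
  have hρ₂sq : ρ₂ ^ 2 ≤ 1 := by nlinarith
  have hydle : ∀ y ∈ Y, ‖y' - y‖ ^ 2 = ρ₂ ^ 2 * (c₃ ^ 2 + 1) := by
    intro y hy; rw [hyd y hy]; ring
  refine ⟨((hfin.insert y').smul_set), ?_, ?_, ?_, ?_⟩
  · exact affineIndependent_smul_set (ne_of_gt hu0) (affineIndependent_insert' hai hns)
  · -- pairwise norms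
    rintro x hx z hz
    obtain ⟨x₀, hx₀, rfl⟩ := Set.mem_smul_set.1 hx
    obtain ⟨z₀, hz₀, rfl⟩ := Set.mem_smul_set.1 hz
    have hn : ‖u • x₀ - u • z₀‖ ^ 2 = u ^ 2 * ‖x₀ - z₀‖ ^ 2 := by
      rw [← smul_sub, norm_smul, Real.norm_eq_abs, mul_pow, sq_abs]
    rw [hn]
    have hu2' : u ^ 2 ≤ 1 := by nlinarith
    rcases Set.mem_insert_iff.1 hx₀ with rfl | hxY
    · rcases Set.mem_insert_iff.1 hz₀ with rfl | hzY
      · simp only [sub_self, norm_zero]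
        norm_num
      · rw [hydle z₀ hzY]; nlinarith [sq_nonneg u]
    · rcases Set.mem_insert_iff.1 hz₀ with rfl | hzY
      · rw [norm_sub_rev, hydle x₀ hxY]; nlinarith [sq_nonneg u]
      · have := hnorm x₀ hxY z₀ hzY
        nlinarith [sq_nonneg ‖x₀ - z₀‖, sq_nonneg u]
  · -- circumradius
    have hsc := isCircum_smul hcirc hu0
    have himg : u • (insert y' Y) = insert (u • y') (u • Y) := Set.smul_set_insert u y' Y
    rw [(circum_spec hsc (by positivity)).2]
    exact hur
  · -- TriSim
    rintro a ha b hb c hc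
    obtain ⟨a₀, ha₀, rfl⟩ := Set.mem_smul_set.1 ha
    obtain ⟨b₀, hb₀, rfl⟩ := Set.mem_smul_set.1 hb
    obtain ⟨c₀, hc₀, rfl⟩ := Set.mem_smul_set.1 hc
    apply triSim_smul hu0
    have hprod0 : ∀ x z : E, (0:ℝ) ≤ ‖x‖ ^ 2 * ‖z‖ ^ 2 :=
      fun x z => mul_nonneg (sq_nonneg _) (sq_nonneg _)
    have hinner3 : ∀ b₁ ∈ Y, ∀ c₁ ∈ Y, (inner ℝ (b₁ - y') (b₁ - c₁) : ℝ) = ‖b₁ - c₁‖ ^ 2 / 2 := by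
      intro b₁ hb₁ c₁ hc₁
      have hbd : b₁ - y' = (b₁ - K₂) - (y' - K₂) := by abel
      have hpair : (inner ℝ (y' - K₂) (b₁ - c₁) : ℝ) = 0 := by
        have : b₁ - c₁ = (K₂ - c₁) - (K₂ - b₁) := by abel
        rw [this, inner_sub_right, horthK c₁ hc₁, horthK b₁ hb₁, sub_zero]
      rw [hbd, inner_sub_left, hpair, sub_zero, inner_triple K₂ b₁ c₁, hKnorm b₁ hb₁,
        show ‖K₂ - c₁‖ = ρ₂ from hKnorm c₁ hc₁]
      ring
    rcases Set.mem_insert_iff.1 hb₀ with hb' | hbY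
    · -- b₀ = y'
      rcases Set.mem_insert_iff.1 ha₀ with ha' | haY
      · -- a₀ = b₀ = y'
        rw [ha', hb']
        simp
      · rcases Set.mem_insert_iff.1 hc₀ with hc' | hcY
        · -- b₀ = c₀ = y'
          rw [hb', hc']
          simp
        · -- main apex case
          rw [hb']
          have hin : (inner ℝ (y' - a₀) (y' - c₀) : ℝ) ≥ (c₃ * ρ₂) ^ 2 - ρ₂ ^ 2 := by
            have hda : y' - a₀ = (y' - K₂) + (K₂ - a₀) := by abel
            have hdc : y' - c₀ = (y' - K₂) + (K₂ - c₀) := by abel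
            have h1 : (inner ℝ (y' - K₂) (K₂ - c₀) : ℝ) = 0 := horthK c₀ hcY
            have h2 : (inner ℝ (K₂ - a₀) (y' - K₂) : ℝ) = 0 := by
              rw [real_inner_comm]; exact horthK a₀ haY
            have h3 : |(inner ℝ (K₂ - a₀) (K₂ - c₀) : ℝ)| ≤ ρ₂ * ρ₂ := by
              calc |(inner ℝ (K₂ - a₀) (K₂ - c₀) : ℝ)| ≤ ‖K₂ - a₀‖ * ‖K₂ - c₀‖ :=
                    abs_real_inner_le_norm _ _
                _ = ρ₂ * ρ₂ := by rw [hKnorm a₀ haY, hKnorm c₀ hcY]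
            have habs := abs_le.1 h3
            rw [hda, hdc, inner_add_left, inner_add_right, inner_add_right, h1, h2,
              real_inner_self_eq_norm_sq, hLval]
            nlinarith
          have hna : ‖a₀ - y'‖ ^ 2 = ρ₂ ^ 2 * (c₃ ^ 2 + 1) := by
            rw [norm_sub_rev]; exact hydle a₀ haY
          have hnc : ‖y' - c₀‖ ^ 2 = ρ₂ ^ 2 * (c₃ ^ 2 + 1) := hydle c₀ hcY
          rw [hna, hnc]
          have h4 : ρ₂ ^ 2 * ρ₂ ^ 2 ≤ ρ₂ ^ 2 := by nlinarith [sq_nonneg ρ₂]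
          have h6 : (0:ℝ) ≤ c₃ ^ 2 - 1 := by nlinarith
          have h5 := mul_le_mul_of_nonneg_right hu2 (sq_nonneg (ρ₂ ^ 2))
          nlinarith [h4, h5, h6, hin, mul_le_mul_of_nonneg_left h4 h6]
    · -- b₀ ∈ Y
      have hN : ‖y' - b₀‖ ^ 2 = ρ₂ ^ 2 * (c₃ ^ 2 + 1) := hydle b₀ hbY
      have hNle : u ^ 2 * ‖y' - b₀‖ ^ 2 ≤ 2 := by
        rw [hN]
        have hX : (0:ℝ) ≤ u ^ 2 * (c₃ ^ 2 + 1) := by positivity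
        have h7 := mul_le_mul_of_nonneg_right hρ₂sq hX
        nlinarith [h7]
      rcases Set.mem_insert_iff.1 ha₀ with ha' | haY
      · rcases Set.mem_insert_iff.1 hc₀ with hc' | hcY
        · -- a₀ = c₀ = y'
          rw [ha', hc']
          have hsym : ‖b₀ - y'‖ ^ 2 = ‖y' - b₀‖ ^ 2 := by rw [norm_sub_rev]
          have hself : (inner ℝ (b₀ - y') (b₀ - y') : ℝ) = ‖b₀ - y'‖ ^ 2 :=
            real_inner_self_eq_norm_sq _
          rw [hself, hsym]
          nlinarith [sq_nonneg ‖y' - b₀‖, mul_nonneg (sq_nonneg u) (sq_nonneg ‖y' - b₀‖)]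
        · -- a₀ = y', c₀ ∈ Y
          rw [ha']
          have h3 := hinner3 b₀ hbY c₀ hcY
          rw [h3]
          nlinarith [sq_nonneg ‖b₀ - c₀‖,
            mul_nonneg (mul_nonneg (sq_nonneg u) (sq_nonneg ‖y' - b₀‖)) (sq_nonneg ‖b₀ - c₀‖)]
        -- done
      · rcases Set.mem_insert_iff.1 hc₀ with hc' | hcY
        · -- c₀ = y', a₀ ∈ Y
          rw [hc']
          have h3 : (inner ℝ (b₀ - a₀) (b₀ - y') : ℝ) = ‖b₀ - a₀‖ ^ 2 / 2 := by
            rw [real_inner_comm]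
            exact hinner3 b₀ hbY a₀ haY
          rw [h3]
          have hab : ‖a₀ - b₀‖ ^ 2 = ‖b₀ - a₀‖ ^ 2 := by rw [norm_sub_rev]
          have hcb : ‖b₀ - y'‖ ^ 2 = ‖y' - b₀‖ ^ 2 := by rw [norm_sub_rev]
          rw [hab, hcb]
          nlinarith [sq_nonneg ‖b₀ - a₀‖,
            mul_nonneg (mul_nonneg (sq_nonneg u) (sq_nonneg ‖y' - b₀‖)) (sq_nonneg ‖b₀ - a₀‖)]
        · exact triSim_inner (htris a₀ haY b₀ hbY c₀ hcY) hu1 hu0.le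

end Helpers

end


section Arith

lemma arith_c₃ {c₀ c₃ : ℝ} (hc₀ : 0 < c₀) (hc₀le : c₀ ≤ 1)
    (hgt : c₀⁻¹ + Real.sqrt (c₀⁻¹ ^ 2 - 1) < c₃) : 1 < c₃ := by
  have h1 : 0 < c₀⁻¹ := inv_pos.2 hc₀
  have h2 : c₀ * c₀⁻¹ = 1 := mul_inv_cancel₀ (ne_of_gt hc₀)
  nlinarith [Real.sqrt_nonneg (c₀⁻¹ ^ 2 - 1)]

lemma arith_rho2le {r c₃ : ℝ} (hr0 : 0 < r) (hr1 : r < 1) (hc₃ : 0 < c₃) :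
    ((c₃ * r) ^ 2 + r ^ 2) / (2 * (c₃ * r)) * (2 * c₃) ≤ c₃ ^ 2 + 1 := by
  rw [div_mul_eq_mul_div, div_le_iff₀ (by positivity)]
  have h : r ^ 2 ≤ r := by nlinarith
  nlinarith [mul_le_mul_of_nonneg_left h (show (0:ℝ) ≤ 2 * c₃ * (c₃ ^ 2 + 1) by positivity)]

lemma arith_gap_empty {r c₁ c₃ : ℝ} (hcr : c₁ ^ 2 < r ^ 2) (hc₁ : 0 < c₁) (hc₃1 : 1 < c₃) :
    (c₁ / 2) ^ 2 < r ^ 2 * (c₃ ^ 2 + 1) ^ 2 / (4 * c₃ ^ 2) := by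
  rw [lt_div_iff₀ (by positivity)]
  have B1 : c₁ ^ 2 * c₃ ^ 2 < r ^ 2 * c₃ ^ 2 := mul_lt_mul_of_pos_right hcr (by positivity)
  have B2 : r ^ 2 * c₃ ^ 2 ≤ r ^ 2 * (c₃ ^ 2 + 1) ^ 2 :=
    mul_le_mul_of_nonneg_left (by nlinarith [sq_nonneg c₃] : c₃ ^ 2 ≤ (c₃ ^ 2 + 1) ^ 2)
      (sq_nonneg r)
  nlinarith [B1, B2]

lemma arith_gap_main {r q c₁ c₃ L₁ : ℝ} (hr1 : r < 1) (hr0 : 0 < r) (hc₃1 : 1 < c₃)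
    (hc₁ : 0 < c₁) (hgap2 : c₁ ^ 2 < r ^ 2 - q ^ 2) (hsq0 : 0 < r ^ 2 - q ^ 2)
    (hL₁sq : L₁ ^ 2 = (c₃ * r) ^ 2 + (r ^ 2 - q ^ 2)) (hL₁0 : 0 < L₁) :
    (c₁ / 2) ^ 2 < r ^ 2 * (c₃ ^ 2 + 1) ^ 2 / (4 * c₃ ^ 2)
      - (r ^ 2 * (c₃ ^ 2 + 1)) ^ 2 / (4 * L₁ ^ 2) := by
  rw [div_sub_div _ _ (by positivity) (by positivity), lt_div_iff₀ (by positivity), hL₁sq]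
  have A1 : c₁ ^ 2 * (c₃ ^ 2 * c₃ ^ 2 * r ^ 2)
      < (r ^ 2 - q ^ 2) * (c₃ ^ 2 * c₃ ^ 2 * r ^ 2) :=
    mul_lt_mul_of_pos_right hgap2 (by positivity)
  have A2 : c₁ ^ 2 * (c₃ ^ 2 * (r ^ 2 - q ^ 2))
      < (r ^ 2 - q ^ 2) * (c₃ ^ 2 * (r ^ 2 - q ^ 2)) :=
    mul_lt_mul_of_pos_right hgap2 (by positivity)
  have A3 : (r ^ 2 - q ^ 2) * (c₃ ^ 2 * (r ^ 2 - q ^ 2))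
      ≤ (r ^ 2 - q ^ 2) * (c₃ ^ 2 * r ^ 2) := by
    apply mul_le_mul_of_nonneg_left _ hsq0.le
    apply mul_le_mul_of_nonneg_left _ (by positivity)
    nlinarith [sq_nonneg q]
  have A4 : (0:ℝ) ≤ (c₃ ^ 2 + 1) * (r ^ 2 * (r ^ 2 - q ^ 2)) := by positivity
  nlinarith [A1, A2, A3, A4]

lemma arith_Lc₁ {c₁ r q c₃ L₁ : ℝ} (hc₁ : 0 < c₁) (hgap2 : c₁ ^ 2 < r ^ 2 - q ^ 2)
    (hL₁sq : L₁ ^ 2 = (c₃ * r) ^ 2 + (r ^ 2 - q ^ 2)) (hL₁0 : 0 < L₁) : c₁ < L₁ := by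
  nlinarith [sq_nonneg (c₃ * r)]

lemma arith_rho1le {L₁ q r c₁ c₃ : ℝ} (hLc₁ : c₁ < L₁) (hL₁0 : 0 < L₁) (hc₁ : 0 < c₁)
    (hkey : L₁ ^ 2 + q ^ 2 = r ^ 2 * (c₃ ^ 2 + 1)) (hr2 : r ^ 2 ≤ 1) (hc₃0 : 0 < c₃) :
    (L₁ ^ 2 + q ^ 2) / (2 * L₁) * (2 * c₁) ≤ c₃ ^ 2 + 1 := by
  rw [div_mul_eq_mul_div, div_le_iff₀ (by positivity), hkey]
  have h1 : r ^ 2 * (c₃ ^ 2 + 1) ≤ c₃ ^ 2 + 1 := by nlinarith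
  nlinarith [mul_le_mul_of_nonneg_left hLc₁.le (by positivity : (0:ℝ) ≤ 2 * (c₃ ^ 2 + 1))]

lemma arith_sq_le_one {r : ℝ} (h0 : 0 ≤ r) (h1 : r ≤ 1) : r ^ 2 ≤ 1 := by nlinarith

lemma arith_hu3 {u c₃ : ℝ} (h1 : u * c₃ < 1) (hu0 : 0 < u) (hc₃1 : 1 < c₃) :
    u ^ 2 * (c₃ ^ 2 + 1) < 2 := by
  have hu1 : u < 1 := by nlinarith
  nlinarith [mul_pos hu0 (lt_trans one_pos hc₃1)]

lemma arith_hu2 {u c₃ : ℝ} (h1 : u * (c₃ ^ 2 + 1) < 2 * Real.sqrt (c₃ ^ 2 - 1))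
    (hu0 : 0 < u) (hc₃1 : 1 < c₃) : u ^ 2 * (c₃ ^ 2 + 1) ^ 2 ≤ 4 * (c₃ ^ 2 - 1) := by
  have h2 : Real.sqrt (c₃ ^ 2 - 1) ^ 2 = c₃ ^ 2 - 1 := Real.sq_sqrt (by nlinarith)
  have h3 : 0 < u * (c₃ ^ 2 + 1) := by positivity
  nlinarith [Real.sqrt_nonneg (c₃ ^ 2 - 1)]

lemma arith_hur {u ρ a c₃ : ℝ} (hle : ρ * (2 * a) ≤ c₃ ^ 2 + 1) (hρ0 : 0 ≤ ρ)
    (ha : 0 < a) (hu0 : 0 < u) (h2 : u * (c₃ ^ 2 + 1) < a) : u * ρ < 1 := by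
  have h3 : u * (ρ * (2 * a)) ≤ u * (c₃ ^ 2 + 1) :=
    mul_le_mul_of_nonneg_left hle hu0.le
  nlinarith

end Arith

set_option maxHeartbeats 1000000 in
/-- Pushing one extra point `y'` orthogonally above the circumcenter of `Y₂`: for
similarity embeddings `Y₁ ⊆ Y₂ ⊂ ℝ^d ⊂ ℝ^{d+1}` satisfying the stated quantitative
bounds in terms of the positive constants `c₀, c₁, c₂, c₃`, there are `δ₀, δ₁ > 0`,
depending only on `c₀, c₁, c₂, c₃`, such that `Y₁' = Y₁ ∪ {y'}` and `Y₂' = Y₂ ∪ {y'}`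
satisfy `√(ρ_{Y₂'}² − ρ_{Y₁'}²) > δ₀`, and `u • Y₁'` and `u • Y₂'` are similarity
embeddings for all `0 < u < δ₁`. -/
theorem exists_pushed_point_simEmb
    (c₀ c₁ c₂ c₃ : ℝ) (hc₀ : 0 < c₀) (hc₁ : 0 < c₁) (hc₂ : 0 < c₂) (hc₃ : 0 < c₃)
    (hc₀le : c₀ ≤ 1) (hc₂le : c₂ ≤ 2)
    (hc₃gt : c₀⁻¹ + Real.sqrt (c₀⁻¹ ^ 2 - 1) < c₃) :
    ∃ δ₀ > (0 : ℝ), ∃ δ₁ > (0 : ℝ),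
      ∀ (d : ℕ) (Y₁ Y₂ : Set (EuclideanSpace ℝ (Fin (d + 1))))
        (y' : EuclideanSpace ℝ (Fin (d + 1))),
        Y₁ ⊆ Y₂ → IsSimEmb Y₁ → IsSimEmb Y₂ →
        (∀ z ∈ Y₂, z (Fin.last d) = 0) →
        circumradius Y₂ < c₀ →
        c₁ < Real.sqrt (circumradius Y₂ ^ 2 - circumradius Y₁ ^ 2) →
        Metric.diam Y₂ < c₂ * circumradius Y₂ →
        (∀ z₁ ∈ Y₂, ∀ z₂ ∈ Y₂, (inner ℝ (y' - circumcenter Y₂) (z₁ - z₂) : ℝ) = 0) →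
        ‖circumcenter Y₂ - y'‖ = c₃ * circumradius Y₂ →
        δ₀ < Real.sqrt (circumradius (Y₂ ∪ {y'}) ^ 2 - circumradius (Y₁ ∪ {y'}) ^ 2) ∧
          ∀ u : ℝ, 0 < u → u < δ₁ →
            IsSimEmb (u • (Y₁ ∪ {y'})) ∧ IsSimEmb (u • (Y₂ ∪ {y'})) := by
  have hc₃1 : 1 < c₃ := arith_c₃ hc₀ hc₀le hc₃gt
  have hsqp : 0 < Real.sqrt (c₃ ^ 2 - 1) := Real.sqrt_pos.2 (by nlinarith)
  set δ₁ : ℝ := min (min 1 (1 / c₃))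
      (min (c₃ / (c₃ ^ 2 + 1)) (min (c₁ / (c₃ ^ 2 + 1))
        (2 * Real.sqrt (c₃ ^ 2 - 1) / (c₃ ^ 2 + 1)))) with hδ₁def
  have hδ₁pos : 0 < δ₁ := by
    rw [hδ₁def]
    simp only [lt_min_iff]
    exact ⟨⟨one_pos, by positivity⟩, by positivity, by positivity, by positivity⟩
  refine ⟨c₁ / 2, by positivity, δ₁, hδ₁pos, ?_⟩
  intro d Y₁ Y₂ y' hsub hS₁ hS₂ hplane hρc₀ hgap hdiam horth hKdist
  obtain ⟨hfin₁, hai₁, hnorm₁, hrad₁, htris₁⟩ := hS₁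
  obtain ⟨hfin₂, hai₂, hnorm₂, hrad₂, htris₂⟩ := hS₂
  set r := circumradius Y₂ with hrdef
  set K₂ := circumcenter Y₂ with hK₂def
  have hsq0 : 0 < r ^ 2 - circumradius Y₁ ^ 2 := Real.sqrt_pos.1 (lt_trans hc₁ hgap)
  have hgap2 : c₁ ^ 2 < r ^ 2 - circumradius Y₁ ^ 2 := (Real.lt_sqrt hc₁.le).1 hgap
  have hrne : r ≠ 0 := by
    intro h
    rw [h] at hsq0
    linarith [sq_nonneg (circumradius Y₁), hsq0, (by norm_num : ((0:ℝ)) ^ 2 = 0)]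
  have hcirc₂ : IsCircum Y₂ K₂ r := circum_genuine hrne
  have hr0 : 0 < r := lt_of_le_of_ne (circumradius_nonneg Y₂) (Ne.symm hrne)
  have hr1 : r < 1 := lt_of_lt_of_le hρc₀ hc₀le
  have hLval : ‖y' - K₂‖ = c₃ * r := by rw [norm_sub_rev]; exact hKdist
  have hL0 : 0 < c₃ * r := by positivity
  have horthV : ∀ w ∈ vectorSpan ℝ Y₂, (inner ℝ (y' - K₂) w : ℝ) = 0 :=
    fun w hw => inner_eq_zero_of_mem_vectorSpan (fun y hy z hz => horth y hy z hz) hw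
  have horthK : ∀ y ∈ Y₂, (inner ℝ (y' - K₂) (K₂ - y) : ℝ) = 0 := by
    intro y hy
    apply horthV
    have h := AffineSubspace.vsub_mem_direction hcirc₂.1 (mem_affineSpan ℝ hy)
    rwa [direction_affineSpan] at h
  have hns₂ : y' ∉ affineSpan ℝ Y₂ := by
    intro hmem
    have hvm : y' - K₂ ∈ vectorSpan ℝ Y₂ := by
      have h := AffineSubspace.vsub_mem_direction hmem hcirc₂.1
      rwa [direction_affineSpan] at h
    have h0 := horthV _ hvm
    rw [real_inner_self_eq_norm_sq] at h0
    have hz : ‖y' - K₂‖ = 0 := sq_eq_zero_iff.1 h0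
    rw [hLval] at hz
    exact (ne_of_gt hL0) hz
  have hns₁ : y' ∉ affineSpan ℝ Y₁ := fun h => hns₂ (affineSpan_mono ℝ hsub h)
  have hcirc₂' := isCircum_insert hcirc₂ (fun y hy z hz => horth y hy z hz) hLval hL0
  set ρ₂' : ℝ := ((c₃ * r) ^ 2 + r ^ 2) / (2 * (c₃ * r)) with hρ₂'def
  have hρ₂'0 : 0 ≤ ρ₂' := by positivity
  have hrad₂' : circumradius (insert y' Y₂) = ρ₂' := (circum_spec hcirc₂' hρ₂'0).2
  have hρ₂'le : ρ₂' * (2 * c₃) ≤ c₃ ^ 2 + 1 := arith_rho2le hr0 hr1 hc₃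
  have hρ₂'sq : ρ₂' ^ 2 = r ^ 2 * (c₃ ^ 2 + 1) ^ 2 / (4 * c₃ ^ 2) := by
    rw [hρ₂'def]; field_simp; ring
  obtain ⟨cc₁, ρ₁', hcirc₁', hρ₁'0, hgapA, hρ₁'le⟩ :
      ∃ (cc : EuclideanSpace ℝ (Fin (d + 1))) (ρ₁' : ℝ),
        IsCircum (insert y' Y₁) cc ρ₁' ∧ 0 ≤ ρ₁' ∧ (c₁ / 2) ^ 2 < ρ₂' ^ 2 - ρ₁' ^ 2 ∧
        ρ₁' * (2 * c₁) ≤ c₃ ^ 2 + 1 := by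
    rcases Set.eq_empty_or_nonempty Y₁ with hY₁e | hY₁ne
    · refine ⟨y', 0, ⟨mem_affineSpan ℝ (Set.mem_insert _ _), ?_⟩, le_refl 0, ?_, ?_⟩
      · intro z hz
        rcases Set.mem_insert_iff.1 hz with h | h
        · rw [h, dist_self]
        · rw [hY₁e] at h
          exact absurd h (Set.notMem_empty z)
      · have hcr : c₁ ^ 2 < r ^ 2 := by
          linarith [sq_nonneg (circumradius Y₁)]
        rw [hρ₂'sq, (by norm_num : ((0:ℝ)) ^ 2 = 0), sub_zero]
        exact arith_gap_empty hcr hc₁ hc₃1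
      · rw [zero_mul]
        positivity
    · obtain ⟨K₁, q, hcirc₁, hq0⟩ := exists_isCircum hfin₁ hY₁ne hai₁
      have hq1 : circumradius Y₁ = q := (circum_spec hcirc₁ hq0).2
      rw [hq1] at hgap2 hsq0
      have hdist1 : ∀ y ∈ Y₁, dist K₂ y = r := fun y hy => hcirc₂.2 y (hsub hy)
      have orth21 : ∀ y ∈ Y₁, ∀ z ∈ Y₁, (inner ℝ (K₂ - K₁) (y - z) : ℝ) = 0 :=
        fun y hy z hz => inner_sub_eq_zero_of_equidist hdist1 hcirc₁.2 hy hz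
      obtain ⟨y₀, hy₀⟩ := hY₁ne
      have hcross : (inner ℝ (K₂ - K₁) (K₁ - y₀) : ℝ) = 0 := by
        apply inner_eq_zero_of_mem_vectorSpan orth21
        have h := AffineSubspace.vsub_mem_direction hcirc₁.1 (mem_affineSpan ℝ hy₀)
        rwa [direction_affineSpan] at h
      have hm : ‖K₂ - K₁‖ ^ 2 = r ^ 2 - q ^ 2 := by
        have h1 : ‖K₂ - y₀‖ = r := by rw [← dist_eq_norm]; exact hdist1 y₀ hy₀
        have h2 : ‖K₁ - y₀‖ = q := by rw [← dist_eq_norm]; exact hcirc₁.2 y₀ hy₀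
        have h3 := norm_add_sq_real (K₂ - K₁) (K₁ - y₀)
        rw [show K₂ - K₁ + (K₁ - y₀) = K₂ - y₀ by abel, h1, hcross, h2] at h3
        linarith
      have hKK : (inner ℝ (y' - K₂) (K₂ - K₁) : ℝ) = 0 := by
        apply horthV
        have hK₁mem : K₁ ∈ affineSpan ℝ Y₂ := affineSpan_mono ℝ hsub hcirc₁.1
        have h := AffineSubspace.vsub_mem_direction hcirc₂.1 hK₁mem
        rwa [direction_affineSpan] at h
      have hL₁sq : ‖y' - K₁‖ ^ 2 = (c₃ * r) ^ 2 + (r ^ 2 - q ^ 2) := by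
        have h3 := norm_add_sq_real (y' - K₂) (K₂ - K₁)
        rw [show y' - K₂ + (K₂ - K₁) = y' - K₁ by abel, hLval, hKK, hm] at h3
        linarith
      set L₁ := ‖y' - K₁‖ with hL₁def
      have hL₁sqpos : 0 < L₁ ^ 2 := by
        rw [hL₁sq]
        linarith [sq_nonneg (c₃ * r), hsq0]
      have hL₁0 : 0 < L₁ := by
        rcases (norm_nonneg (y' - K₁)).lt_or_eq with h' | h'
        · exact h'
        · rw [hL₁def, ← h'] at hL₁sqpos
          norm_num at hL₁sqpos
      have horth1 : ∀ y ∈ Y₁, ∀ z ∈ Y₁, (inner ℝ (y' - K₁) (y - z) : ℝ) = 0 := by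
        intro y hy z hz
        rw [show y' - K₁ = (y' - K₂) + (K₂ - K₁) by abel, inner_add_left,
          horth y (hsub hy) z (hsub hz), orth21 y hy z hz, add_zero]
      have hins := isCircum_insert hcirc₁ horth1 rfl hL₁0
      refine ⟨_, (L₁ ^ 2 + q ^ 2) / (2 * L₁), hins, by positivity, ?_, ?_⟩
      · have hkey : L₁ ^ 2 + q ^ 2 = r ^ 2 * (c₃ ^ 2 + 1) := by rw [hL₁sq]; ring
        have e1 : ((L₁ ^ 2 + q ^ 2) / (2 * L₁)) ^ 2
            = (r ^ 2 * (c₃ ^ 2 + 1)) ^ 2 / (4 * L₁ ^ 2) := by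
          rw [hkey]; field_simp; ring
        rw [hρ₂'sq, e1]
        exact arith_gap_main hr1 hr0 hc₃1 hc₁ hgap2 hsq0 hL₁sq hL₁0
      · have hLc₁ : c₁ < L₁ := arith_Lc₁ hc₁ hgap2 hL₁sq hL₁0
        have hkey : L₁ ^ 2 + q ^ 2 = r ^ 2 * (c₃ ^ 2 + 1) := by rw [hL₁sq]; ring
        have hr2 : r ^ 2 ≤ 1 := arith_sq_le_one hr0.le hr1.le
        exact arith_rho1le hLc₁ hL₁0 hc₁ hkey hr2 hc₃
  have hrad₁' : circumradius (insert y' Y₁) = ρ₁' := (circum_spec hcirc₁' hρ₁'0).2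
  constructor
  · rw [Set.union_singleton, Set.union_singleton, hrad₂', hrad₁']
    exact (Real.lt_sqrt (by positivity)).2 hgapA
  · intro u hu0 huδ
    rw [hδ₁def] at huδ
    simp only [lt_min_iff] at huδ
    obtain ⟨⟨hu1', hut⟩, huc, huk, hus⟩ := huδ
    have hu1 : u ≤ 1 := hu1'.le
    have hc₃sq : (0:ℝ) < c₃ ^ 2 + 1 := by positivity
    have hu3 : u ^ 2 * (c₃ ^ 2 + 1) < 2 :=
      arith_hu3 ((lt_div_iff₀ hc₃).1 hut) hu0 hc₃1
    have hu2 : u ^ 2 * (c₃ ^ 2 + 1) ^ 2 ≤ 4 * (c₃ ^ 2 - 1) :=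
      arith_hu2 ((lt_div_iff₀ hc₃sq).1 hus) hu0 hc₃1
    have hur₂ : u * ρ₂' < 1 :=
      arith_hur hρ₂'le hρ₂'0 hc₃ hu0 ((lt_div_iff₀ hc₃sq).1 huc)
    have hur₁ : u * ρ₁' < 1 :=
      arith_hur hρ₁'le hρ₁'0 hc₁ hu0 ((lt_div_iff₀ hc₃sq).1 huk)
    constructor
    · rw [Set.union_singleton]
      exact isSimEmb_smul_insert hfin₁ hai₁ hnorm₁ htris₁
        (fun y hy => hcirc₂.2 y (hsub hy)) hr0.le hr1 hc₃1
        (fun y hy => horthK y (hsub hy)) hLval hns₁ hcirc₁' hρ₁'0 hu0 hu1 hu2 hu3 hur₁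
    · rw [Set.union_singleton]
      exact isSimEmb_smul_insert hfin₂ hai₂ hnorm₂ htris₂ hcirc₂.2 hr0.le hr1 hc₃1
        horthK hLval hns₂ hcirc₂' hρ₂'0 hu0 hu1 hu2 hu3 hur₂
end

section
/- There exist a two-point set Y = {y₀, y₁} ⊂ ℝ⁴ with circumradius ρ_Y = ∥y₀−y₁∥/2 and a sequence (Y_n) of five-point similarity embeddings in ℝ⁴, each consisting of four points converging to y₀ and one point converging to y₁ (so that each Y_n is clustered in type ⟨3,0⟩ as a metric space), such that Y_n → Y in Hausdorff distance but the circumradii ρ_{Y_n} converge to a limit strictly greater than ρ_Y. -/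
open Filter Metric

noncomputable section

/-! ### Auxiliary constructions for the counterexample -/

def pt (a b c d : ℝ) : EuclideanSpace ℝ (Fin 4) := WithLp.toLp 2 ![a, b, c, d]

@[simp] lemma pt0 (a b c d : ℝ) : pt a b c d 0 = a := rfl
@[simp] lemma pt1 (a b c d : ℝ) : pt a b c d 1 = b := rfl
@[simp] lemma pt2 (a b c d : ℝ) : pt a b c d 2 = c := rfl
@[simp] lemma pt3 (a b c d : ℝ) : pt a b c d 3 = d := rfl

@[simp] lemma sub_app (x y : EuclideanSpace ℝ (Fin 4)) (i : Fin 4) : (x - y) i = x i - y i := rfl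
@[simp] lemma add_app (x y : EuclideanSpace ℝ (Fin 4)) (i : Fin 4) : (x + y) i = x i + y i := rfl
@[simp] lemma smul_app (r : ℝ) (x : EuclideanSpace ℝ (Fin 4)) (i : Fin 4) :
    (r • x) i = r * x i := rfl

lemma normsq (x : EuclideanSpace ℝ (Fin 4)) :
    ‖x‖ ^ 2 = x 0 ^ 2 + x 1 ^ 2 + x 2 ^ 2 + x 3 ^ 2 := by
  rw [EuclideanSpace.norm_eq, Real.sq_sqrt (by positivity)]
  simp [Fin.sum_univ_four, Real.norm_eq_abs, sq_abs]

lemma norm4 (x : EuclideanSpace ℝ (Fin 4)) :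
    ‖x‖ = Real.sqrt (x 0 ^ 2 + x 1 ^ 2 + x 2 ^ 2 + x 3 ^ 2) := by
  rw [EuclideanSpace.norm_eq]
  simp [Fin.sum_univ_four, Real.norm_eq_abs, sq_abs]

lemma dist4 (x y : EuclideanSpace ℝ (Fin 4)) :
    dist x y = Real.sqrt ((x 0 - y 0)^2 + (x 1 - y 1)^2 + (x 2 - y 2)^2 + (x 3 - y 3)^2) := by
  rw [dist_eq_norm, norm4]; simp

lemma dist_le_of_sq_le {x y : EuclideanSpace ℝ (Fin 4)} {r : ℝ} (hr : 0 ≤ r)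
    (h : (x 0 - y 0)^2 + (x 1 - y 1)^2 + (x 2 - y 2)^2 + (x 3 - y 3)^2 ≤ r ^ 2) :
    dist x y ≤ r := by
  rw [dist4]
  exact (Real.sqrt_le_sqrt h).trans_eq (Real.sqrt_sq hr)

/-- The five points of the `n`-th configuration, at scale `s`. -/
def Pf (s : ℝ) : Fin 5 → EuclideanSpace ℝ (Fin 4) :=
  ![pt s 0 0 0, pt 0 s (2*s^2) (s^2/4), pt (-s) 0 0 0, pt 0 (-s) (2*s^2) (s^2/4), pt 0 0 0 1]

/-- The matrix of squared distances of the five points. -/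
def Dm (s : ℝ) : Fin 5 → Fin 5 → ℝ :=
  ![![0, 2*s^2 + 65/16*s^4, 4*s^2, 2*s^2 + 65/16*s^4, 1 + s^2],
    ![2*s^2 + 65/16*s^4, 0, 2*s^2 + 65/16*s^4, 4*s^2, 1 + s^2/2 + 65/16*s^4],
    ![4*s^2, 2*s^2 + 65/16*s^4, 0, 2*s^2 + 65/16*s^4, 1 + s^2],
    ![2*s^2 + 65/16*s^4, 4*s^2, 2*s^2 + 65/16*s^4, 0, 1 + s^2/2 + 65/16*s^4],
    ![1 + s^2, 1 + s^2/2 + 65/16*s^4, 1 + s^2, 1 + s^2/2 + 65/16*s^4, 0]]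

lemma nsq (s : ℝ) (i j : Fin 5) : ‖Pf s i - Pf s j‖ ^ 2 = Dm s i j := by
  fin_cases i <;> fin_cases j <;> (rw [normsq]; simp [Pf, Dm, pt]) <;> ring

lemma aff_ind {s : ℝ} (h0 : 0 < s) : AffineIndependent ℝ (Pf s) := by
  rw [affineIndependent_iff_of_fintype]
  intro w hw hs
  rw [Finset.univ.weightedVSub_eq_linear_combination hw] at hs
  have key : ∀ k : Fin 4, (∑ i, w i • Pf s i) k = 0 := fun k => by rw [hs]; rfl
  have e0 := key 0
  have e1 := key 1
  have e2 := key 2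
  have e3 := key 3
  simp only [Fin.sum_univ_five] at e0 e1 e2 e3
  simp [Pf] at e0 e1 e2 e3
  simp only [Fin.sum_univ_five] at hw
  have hs2 : 0 < s^2 := by positivity
  have h02 : w 0 = w 2 := by
    have : (w 0 - w 2) * s = 0 := by linarith [e0]
    rcases mul_eq_zero.1 this with h | h
    · linarith
    · exact absurd h (ne_of_gt h0)
  have h13 : w 1 = w 3 := by
    have : (w 1 - w 3) * s = 0 := by linarith [e1]
    rcases mul_eq_zero.1 this with h | h
    · linarith
    · exact absurd h (ne_of_gt h0)
  have h13' : w 1 + w 3 = 0 := by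
    have : (w 1 + w 3) * (2*s^2) = 0 := by linarith [e2]
    rcases mul_eq_zero.1 this with h | h
    · linarith
    · nlinarith
  have h1 : w 1 = 0 := by linarith
  have h3 : w 3 = 0 := by linarith
  have h4 : w 4 = 0 := by
    have : (w 1 + w 3) * (s^2/4) + w 4 * 1 = 0 := by linarith [e3]
    rw [h13'] at this; linarith
  have h0' : w 0 = 0 := by linarith
  intro i; fin_cases i <;> simp_all

/-- Circumcenter `z`-coordinate. -/
def zc (s : ℝ) : ℝ := 69/64*s^2 - 1/16
/-- Circumcenter `t`-coordinate. -/
def tc (s : ℝ) : ℝ := (1 - s^2)/2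
/-- Circumcenter of the five-point configuration. -/
def cce (s : ℝ) : EuclideanSpace ℝ (Fin 4) := pt 0 0 (zc s) (tc s)
/-- Squared circumradius of the five-point configuration. -/
def radsq (s : ℝ) : ℝ := s^2 + zc s^2 + tc s^2
/-- Circumradius of the five-point configuration. -/
def rad (s : ℝ) : ℝ := Real.sqrt (radsq s)

lemma dist_cc (s : ℝ) (i : Fin 5) : dist (cce s) (Pf s i) = rad s := by
  fin_cases i <;> rw [dist4, rad, radsq] <;> congr 1 <;>
    simp [Pf, cce, pt, zc, tc] <;> ring

lemma circumradius_eq_of {ι : Type*} [Nonempty ι] [Finite ι]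
    {p : ι → EuclideanSpace ℝ (Fin 4)} (ha : AffineIndependent ℝ p)
    {c : EuclideanSpace ℝ (Fin 4)} {ρ : ℝ}
    (h : IsCircum (Set.range p) c ρ) (hρ : 0 ≤ ρ) : circumradius (Set.range p) = ρ := by
  have hex : ∃ pr : EuclideanSpace ℝ (Fin 4) × ℝ,
      IsCircum (Set.range p) pr.1 pr.2 ∧ 0 ≤ pr.2 := ⟨(c, ρ), h, hρ⟩
  have hspec := hex.choose_spec
  have key : ∀ (c' : EuclideanSpace ℝ (Fin 4)) (ρ' : ℝ), IsCircum (Set.range p) c' ρ' →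
      (⟨c', ρ'⟩ : EuclideanGeometry.Sphere (EuclideanSpace ℝ (Fin 4)))
        = ha.existsUnique_dist_eq.choose := by
    intro c' ρ' hc'
    refine ha.existsUnique_dist_eq.choose_spec.2 _ ⟨hc'.1, ?_⟩
    rintro x ⟨i, rfl⟩
    rw [Metric.mem_sphere']
    exact hc'.2 _ ⟨i, rfl⟩
  have h1 := key _ _ h
  have h2 := key _ _ hspec.1
  have heq : (⟨hex.choose.1, hex.choose.2⟩ : EuclideanGeometry.Sphere (EuclideanSpace ℝ (Fin 4)))
      = (⟨c, ρ⟩ : EuclideanGeometry.Sphere (EuclideanSpace ℝ (Fin 4))) := by rw [h1, h2]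
  have hr : hex.choose.2 = ρ := congrArg EuclideanGeometry.Sphere.radius heq
  rw [circumradius, circumData, dif_pos hex, hr]

lemma span_top {s : ℝ} (h0 : 0 < s) : affineSpan ℝ (Set.range (Pf s)) = ⊤ := by
  rw [(aff_ind h0).affineSpan_eq_top_iff_card_eq_finrank_add_one]
  simp [finrank_euclideanSpace_fin]

lemma isCircum_Pf {s : ℝ} (h0 : 0 < s) : IsCircum (Set.range (Pf s)) (cce s) (rad s) := by
  constructor
  · rw [span_top h0]; trivial
  · rintro y ⟨i, rfl⟩; exact dist_cc s i

lemma circum_Pf {s : ℝ} (h0 : 0 < s) : circumradius (Set.range (Pf s)) = rad s :=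
  circumradius_eq_of (aff_ind h0) (isCircum_Pf h0) (Real.sqrt_nonneg _)

set_option maxHeartbeats 2000000 in
lemma tri_all {s : ℝ} (h0 : 0 < s) (h1 : s ≤ 1/10) (i j k : Fin 5) :
    TriSim (Pf s i) (Pf s j) (Pf s k) := by
  have hs2 : s^2 ≤ 1/100 := by nlinarith
  have hs2p : (0:ℝ) ≤ s^2 := by positivity
  have hs4 : s^4 ≤ s^2/100 := by nlinarith
  have hs4p : (0:ℝ) ≤ s^4 := by positivity
  have hs6 : s^6 ≤ s^4/100 := by nlinarith
  have hs6p : (0:ℝ) ≤ s^6 := by positivity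
  have hs8 : s^8 ≤ s^6/100 := by nlinarith
  have hs8p : (0:ℝ) ≤ s^8 := by positivity
  simp only [TriSim, nsq]
  fin_cases i <;> fin_cases j <;> fin_cases k <;> simp [Dm] <;>
    first
    | linarith
    | nlinarith

def y0 : EuclideanSpace ℝ (Fin 4) := pt 0 0 0 0
def y1 : EuclideanSpace ℝ (Fin 4) := pt 0 0 0 1

lemma circum_pair : circumradius ({y0, y1} : Set (EuclideanSpace ℝ (Fin 4))) = 1/2 := by
  have hne : y0 ≠ y1 := by
    intro h
    have := congrArg (fun v : EuclideanSpace ℝ (Fin 4) => v 3) h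
    simp [y0, y1] at this
  have hrange : Set.range ![y0, y1] = ({y0, y1} : Set (EuclideanSpace ℝ (Fin 4))) := by
    ext x
    simp [Fin.exists_fin_two]
    tauto
  have ha : AffineIndependent ℝ ![y0, y1] := affineIndependent_of_ne ℝ hne
  have hmem : pt 0 0 0 (1/2) ∈ affineSpan ℝ (Set.range ![y0, y1]) := by
    have h0 : y0 ∈ affineSpan ℝ (Set.range ![y0, y1]) := by
      apply subset_affineSpan
      rw [hrange]; exact Set.mem_insert _ _
    have h1 : y1 ∈ affineSpan ℝ (Set.range ![y0, y1]) := by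
      apply subset_affineSpan
      rw [hrange]; exact Set.mem_insert_of_mem _ rfl
    have : pt 0 0 0 (1/2) = (1/2 : ℝ) • (y1 -ᵥ y0) +ᵥ y0 := by
      ext i; fin_cases i <;> simp [y0, y1] <;> norm_num
    rw [this]
    exact AffineSubspace.smul_vsub_vadd_mem _ _ h1 h0 h0
  have sqrt_eq_half : ∀ a : ℝ, a = (1/2:ℝ)^2 → Real.sqrt a = 1/2 := by
    intro a ha
    rw [ha, Real.sqrt_sq]; norm_num
  have hic : IsCircum (Set.range ![y0, y1]) (pt 0 0 0 (1/2)) (1/2) := by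
    refine ⟨hmem, ?_⟩
    rintro y ⟨i, rfl⟩
    fin_cases i <;> rw [dist4] <;> apply sqrt_eq_half <;> simp [y0, y1] <;> norm_num
  have := circumradius_eq_of ha hic (by norm_num)
  rwa [hrange] at this


lemma norm_y01 : ‖y0 - y1‖ = 1 := by
  rw [norm4]
  simp [y0, y1]

lemma rad_lt_one {s : ℝ} (h0 : 0 < s) (h1 : s ≤ 1/10) : rad s < 1 := by
  have hs2 : s^2 ≤ 1/100 := by nlinarith
  have hs4 : s^4 ≤ 1/10000 := by nlinarith
  rw [rad, Real.sqrt_lt' one_pos]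
  unfold radsq zc tc
  nlinarith [hs2, hs4, sq_nonneg s]

lemma pairs_lt_two {s : ℝ} (h0 : 0 < s) (h1 : s ≤ 1/10) (i j : Fin 5) :
    ‖Pf s i - Pf s j‖ ^ 2 < 2 := by
  have hs2 : s^2 ≤ 1/100 := by nlinarith
  have hs4 : s^4 ≤ 1/10000 := by nlinarith
  have hs2p : (0:ℝ) ≤ s^2 := by positivity
  have hs4p : (0:ℝ) ≤ s^4 := by positivity
  rw [nsq]
  fin_cases i <;> fin_cases j <;> simp [Dm] <;> linarith

lemma simemb {s : ℝ} (h0 : 0 < s) (h1 : s ≤ 1/10) : IsSimEmb (Set.range (Pf s)) := by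
  refine ⟨Set.finite_range _, (aff_ind h0).range, ?_, ?_, ?_⟩
  · rintro y ⟨i, rfl⟩ y' ⟨j, rfl⟩
    exact pairs_lt_two h0 h1 i j
  · rw [circum_Pf h0]
    exact rad_lt_one h0 h1
  · rintro a ⟨i, rfl⟩ b ⟨j, rfl⟩ c ⟨k, rfl⟩
    exact tri_all h0 h1 i j k

lemma close_y0 {s : ℝ} (h0 : 0 < s) (h1 : s ≤ 1/10) :
    ∀ i : Fin 5, (i : ℕ) < 4 → dist (Pf s i) y0 ≤ 2 * s := by
  have hs2 : s^2 ≤ 1/100 := by nlinarith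
  have hs4 : s^4 ≤ s^2/100 := by nlinarith
  intro i hi
  fin_cases i <;>
  [ (apply dist_le_of_sq_le (by linarith); simp [Pf, y0]; nlinarith [hs2, hs4]);
    (apply dist_le_of_sq_le (by linarith); simp [Pf, y0]; nlinarith [hs2, hs4]);
    (apply dist_le_of_sq_le (by linarith); simp [Pf, y0]; nlinarith [hs2, hs4]);
    (apply dist_le_of_sq_le (by linarith); simp [Pf, y0]; nlinarith [hs2, hs4]);
    (simp at hi)]

lemma Pf4 (s : ℝ) : Pf s 4 = y1 := by
  simp [Pf, y1]

def sn (n : ℕ) : ℝ := 1 / ((n : ℝ) + 10)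

lemma sn_pos (n : ℕ) : 0 < sn n := by
  have : (0:ℝ) < (n : ℝ) + 10 := by positivity
  exact div_pos one_pos this

lemma sn_le (n : ℕ) : sn n ≤ 1/10 := by
  have h : (10:ℝ) ≤ (n : ℝ) + 10 := by
    have : (0:ℝ) ≤ (n : ℝ) := Nat.cast_nonneg n
    linarith
  exact one_div_le_one_div_of_le (by norm_num) h

lemma sn_tendsto : Tendsto sn atTop (nhds 0) := by
  have h : Tendsto (fun n : ℕ => (n : ℝ) + 10) atTop atTop :=
    tendsto_atTop_add_const_right _ 10 tendsto_natCast_atTop_atTop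
  exact h.inv_tendsto_atTop.congr (fun n => by simp [sn, one_div])

lemma two_sn_tendsto : Tendsto (fun n => 2 * sn n) atTop (nhds 0) := by
  simpa using sn_tendsto.const_mul 2

lemma log_lt_eps {s d2 : ℝ} (h0 : 0 < s) (h1 : s ≤ 1/10) (hd0 : 0 ≤ d2) (hd : d2 ≤ 4*s^2) :
    -Real.log (1 - 1/2 * d2) < -Real.log (1 - 5*s^2/2) := by
  have h5 : (0:ℝ) < 1 - 5*s^2/2 := by nlinarith
  have := Real.log_lt_log h5 (by nlinarith : 1 - 5*s^2/2 < 1 - 1/2 * d2)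
  linarith

lemma eps_le_log {s d2 : ℝ} (h0 : 0 < s) (h1 : s ≤ 1/10) (hd1 : 1 ≤ d2) (hd2 : d2 < 2) :
    ¬(-Real.log (1 - 1/2 * d2) < -Real.log (1 - 5*s^2/2)) := by
  have hpos : (0:ℝ) < 1 - 1/2 * d2 := by nlinarith
  have := Real.log_le_log hpos (by nlinarith : 1 - 1/2 * d2 ≤ 1 - 5*s^2/2)
  linarith

lemma eps_pos {s : ℝ} (h0 : 0 < s) (h1 : s ≤ 1/10) : 0 < -Real.log (1 - 5*s^2/2) := by
  have := Real.log_neg (by nlinarith : (0:ℝ) < 1 - 5*s^2/2) (by nlinarith : 1 - 5*s^2/2 < 1)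
  linarith

lemma cl_intra0 {s d2 : ℝ} (h0 : 0 < s) (h1 : s ≤ 1/10) (hd0 : 0 ≤ d2) (hd : d2 ≤ 4*s^2) :
    (-Real.log (1 - 1/2 * d2) < -Real.log (1 - 5*s^2/2)) ↔ (0 : Fin 2) = 0 :=
  iff_of_true (log_lt_eps h0 h1 hd0 hd) rfl

lemma cl_intra1 {s d2 : ℝ} (h0 : 0 < s) (h1 : s ≤ 1/10) (hd0 : 0 ≤ d2) (hd : d2 ≤ 4*s^2) :
    (-Real.log (1 - 1/2 * d2) < -Real.log (1 - 5*s^2/2)) ↔ (1 : Fin 2) = 1 :=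
  iff_of_true (log_lt_eps h0 h1 hd0 hd) rfl

lemma cl_cross01 {s d2 : ℝ} (h0 : 0 < s) (h1 : s ≤ 1/10) (hd1 : 1 ≤ d2) (hd2 : d2 < 2) :
    (-Real.log (1 - 1/2 * d2) < -Real.log (1 - 5*s^2/2)) ↔ (0 : Fin 2) = 1 :=
  iff_of_false (eps_le_log h0 h1 hd1 hd2) (by decide)

lemma cl_cross10 {s d2 : ℝ} (h0 : 0 < s) (h1 : s ≤ 1/10) (hd1 : 1 ≤ d2) (hd2 : d2 < 2) :
    (-Real.log (1 - 1/2 * d2) < -Real.log (1 - 5*s^2/2)) ↔ (1 : Fin 2) = 0 :=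
  iff_of_false (eps_le_log h0 h1 hd1 hd2) (by decide)

set_option maxHeartbeats 2000000 in
lemma clustered {s : ℝ} (h0 : 0 < s) (h1 : s ≤ 1/10) (i j : Fin 5) :
    -Real.log (1 - 1/2 * ‖Pf s i - Pf s j‖ ^ 2) < -Real.log (1 - 5*s^2/2) ↔
      (![0, 0, 0, 0, 1] : Fin 5 → Fin 2) i = ![0, 0, 0, 0, 1] j := by
  have hs2 : s^2 ≤ 1/100 := by nlinarith
  have hs4 : s^4 ≤ s^2/100 := by nlinarith
  have hs2p : (0:ℝ) ≤ s^2 := by positivity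
  have hs4p : (0:ℝ) ≤ s^4 := by positivity
  fin_cases i <;> fin_cases j <;>
  first
  | exact cl_intra0 h0 h1 (by positivity) (by rw [nsq]; simp [Dm] <;> linarith)
  | exact cl_intra1 h0 h1 (by positivity) (by rw [nsq]; simp [Dm] <;> linarith)
  | exact cl_cross01 h0 h1 (by rw [nsq]; simp [Dm] <;> linarith)
      (by rw [nsq]; simp [Dm] <;> linarith)
  | exact cl_cross10 h0 h1 (by rw [nsq]; simp [Dm] <;> linarith)
      (by rw [nsq]; simp [Dm] <;> linarith)

lemma radsq_cont : Continuous radsq := by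
  unfold radsq zc tc
  continuity

lemma rad_tendsto : Tendsto (fun n => rad (sn n)) atTop (nhds (Real.sqrt 65 / 16)) := by
  have h1 : Tendsto (fun n => radsq (sn n)) atTop (nhds (radsq 0)) :=
    (radsq_cont.tendsto 0).comp sn_tendsto
  have h2 : Tendsto (fun n => rad (sn n)) atTop (nhds (Real.sqrt (radsq 0))) :=
    (Real.continuous_sqrt.tendsto _).comp h1
  have h3 : Real.sqrt (radsq 0) = Real.sqrt 65 / 16 := by
    have : radsq 0 = 65 * (1/16)^2 := by norm_num [radsq, zc, tc]
    rw [this, Real.sqrt_mul (by norm_num), Real.sqrt_sq (by norm_num)]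
    ring
  rwa [h3] at h2

/-- There exist a two-point set `Y = {y₀, y₁} ⊂ ℝ⁴`, whose circumradius is
`‖y₀ − y₁‖/2`, and a sequence of five-point similarity embeddings `Y_n ⊂ ℝ⁴`, each with
four points converging to `y₀` and one point converging to `y₁` (so each `Y_n` is
clustered in type `⟨3,0⟩` as a metric space), such that `Y_n → Y` in Hausdorff distance
but the circumradii `ρ_{Y_n}` converge to a limit strictly greater than `ρ_Y`. -/
theorem exists_five_point_simEmb_type_three_zero_counterexample :
    ∃ y₀ y₁ : EuclideanSpace ℝ (Fin 4), y₀ ≠ y₁ ∧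
      circumradius ({y₀, y₁} : Set (EuclideanSpace ℝ (Fin 4))) = ‖y₀ - y₁‖ / 2 ∧
      ∃ y : ℕ → Fin 5 → EuclideanSpace ℝ (Fin 4),
        (∀ n, Function.Injective (y n)) ∧
        (∀ n, IsSimEmb (Set.range (y n))) ∧
        (∀ i : Fin 5, (i : ℕ) < 4 → Tendsto (fun n => y n i) atTop (nhds y₀)) ∧
        Tendsto (fun n => y n 4) atTop (nhds y₁) ∧
        (∀ n, ∃ ε > (0 : ℝ), ∃ f : Fin 5 → Fin 2,
          (∀ i j, -Real.log (1 - (1 / 2) * ‖y n i - y n j‖ ^ 2) < ε ↔ f i = f j) ∧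
          ∀ c, (Finset.univ.filter fun i => f i = c).card = (![3, 0] : Fin 2 → ℕ) c + 1) ∧
        Tendsto (fun n => Metric.hausdorffDist (Set.range (y n))
          ({y₀, y₁} : Set (EuclideanSpace ℝ (Fin 4)))) atTop (nhds 0) ∧
        ∃ ρlim : ℝ,
          circumradius ({y₀, y₁} : Set (EuclideanSpace ℝ (Fin 4))) < ρlim ∧
          Tendsto (fun n => circumradius (Set.range (y n))) atTop (nhds ρlim) := by
  refine ⟨y0, y1, ?_, ?_, fun n => Pf (sn n), ?_, ?_, ?_, ?_, ?_, ?_, ?_⟩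
  · intro h
    have := congrArg (fun v : EuclideanSpace ℝ (Fin 4) => v 3) h
    simp [y0, y1] at this
  · rw [circum_pair, norm_y01]
  · exact fun n => (aff_ind (sn_pos n)).injective
  · exact fun n => simemb (sn_pos n) (sn_le n)
  · intro i hi
    rw [tendsto_iff_dist_tendsto_zero]
    exact squeeze_zero (fun n => dist_nonneg)
      (fun n => close_y0 (sn_pos n) (sn_le n) i hi) two_sn_tendsto
  · simp only [Pf4]
    exact tendsto_const_nhds
  · intro n
    refine ⟨-Real.log (1 - 5*(sn n)^2/2), eps_pos (sn_pos n) (sn_le n), ![0, 0, 0, 0, 1],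
      fun i j => clustered (sn_pos n) (sn_le n) i j, by decide⟩
  · apply squeeze_zero (fun n => hausdorffDist_nonneg) (fun n => ?_) two_sn_tendsto
    apply hausdorffDist_le_of_mem_dist (by linarith [sn_pos n])
    · rintro x ⟨i, rfl⟩
      by_cases hi : (i : ℕ) < 4
      · exact ⟨y0, Set.mem_insert _ _, close_y0 (sn_pos n) (sn_le n) i hi⟩
      · have : i = 4 := by omega
        subst this
        refine ⟨y1, Set.mem_insert_of_mem _ rfl, ?_⟩
        show dist (Pf (sn n) 4) y1 ≤ 2 * sn n
        rw [Pf4]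
        simp [dist_self]
        linarith [sn_pos n]
      
    · intro y hy
      rcases hy with rfl | hy
      · exact ⟨Pf (sn n) 0, ⟨0, rfl⟩,
          by rw [dist_comm]; exact close_y0 (sn_pos n) (sn_le n) 0 (by norm_num)⟩
      · rcases hy with rfl
        refine ⟨Pf (sn n) 4, ⟨4, rfl⟩, ?_⟩
        rw [Pf4, dist_self]
        linarith [sn_pos n]
  · refine ⟨Real.sqrt 65 / 16, ?_, ?_⟩
    · rw [circum_pair]
      have h8 : (8:ℝ) < Real.sqrt 65 := (Real.lt_sqrt (by norm_num)).2 (by norm_num)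
      linarith
    · exact rad_tendsto.congr (fun n => (circum_Pf (sn_pos n)).symm)
end
end
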